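/- Let λ2 ∈ (0,1), p1 ∈ (0,1), p2 ∈ (0,1]. Define S := λ2·(1 − p2 − λ2·p1·p2 + 2·p1·p2 + √(1 − 2·p2 + p2² + 4·p1·p2 − 2·λ2·p1·p2 − 2·λ2·p1·p2² + λ2²·p1²·p2²)) / (2·p2·(1 − λ2 − p1 + λ2·p1)). Then, with R the 2×2 real matrix defined below and I the 2×2 identity matrix, det(S·I − R) = 0, and every real number x with det(x·I − R) = 0 satisfies |x| ≤ S; that is, S is the spectral radius of R. -/

import Mathlib

open Matrix

theorem QBD_spectral_radius (l2 p1 p2 : ℝ)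
    (hl2 : l2 ∈ Set.Ioo (0:ℝ) 1) (hp1 : p1 ∈ Set.Ioo (0:ℝ) 1) (hp2 : p2 ∈ Set.Ioc (0:ℝ) 1) :
    let R : Matrix (Fin 2) (Fin 2) ℝ :=
      !![l2*(1 - p2 + p1*p2) / ((1 - l2)*(1 - p1)*p2), l2 / ((1 - l2)*(1 - p1)*p2);
         l2*p1 / (1 - p1), l2*p1 / (1 - p1)]
    let S : ℝ := l2 * (1 - p2 - l2*p1*p2 + 2*p1*p2 +
      Real.sqrt (1 - 2*p2 + p2^2 + 4*p1*p2 - 2*l2*p1*p2 - 2*l2*p1*p2^2 + l2^2*p1^2*p2^2)) /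
      (2*p2*(1 - l2 - p1 + l2*p1))
    (S • (1 : Matrix (Fin 2) (Fin 2) ℝ) - R).det = 0 ∧
    ∀ x : ℝ, (x • (1 : Matrix (Fin 2) (Fin 2) ℝ) - R).det = 0 → |x| ≤ S := by
  obtain ⟨hl0, hl1⟩ := hl2
  obtain ⟨hp10, hp11⟩ := hp1
  obtain ⟨hp20, hp21⟩ := hp2
  intro R S
  have h1 : (0:ℝ) < 1 - l2 := by linarith
  have h2 : (0:ℝ) < 1 - p1 := by linarith
  have hQ0 : (0:ℝ) ≤ 1 - 2*p2 + p2^2 + 4*p1*p2 - 2*l2*p1*p2 - 2*l2*p1*p2^2 + l2^2*p1^2*p2^2 := by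
    nlinarith [sq_nonneg (1 - p2 - l2*p1*p2 + 2*p1*p2),
      mul_pos (mul_pos hp10 h2) (mul_pos h1 (mul_pos hp20 hp20))]
  obtain ⟨r, hrdef⟩ : ∃ r : ℝ, r = Real.sqrt (1 - 2*p2 + p2^2 + 4*p1*p2 - 2*l2*p1*p2
      - 2*l2*p1*p2^2 + l2^2*p1^2*p2^2) := ⟨_, rfl⟩
  have hr2 : r^2 = 1 - 2*p2 + p2^2 + 4*p1*p2 - 2*l2*p1*p2 - 2*l2*p1*p2^2 + l2^2*p1^2*p2^2 := by
    rw [hrdef]; exact Real.sq_sqrt hQ0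
  have hr0 : 0 ≤ r := hrdef ▸ Real.sqrt_nonneg _
  obtain ⟨s, hs⟩ : ∃ s : ℝ, s = S := ⟨S, rfl⟩
  have hsval : s = l2 * (1 - p2 - l2*p1*p2 + 2*p1*p2 + r) / (2*p2*(1 - l2 - p1 + l2*p1)) := by
    rw [hs, hrdef]
  have hD : ((1 - l2)*(1 - p1)*p2) ≠ 0 := by positivity
  have hp1ne : (1 - p1) ≠ 0 := ne_of_gt h2
  have hl2ne : (1 - l2) ≠ 0 := ne_of_gt h1
  have hp2ne : p2 ≠ 0 := ne_of_gt hp20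
  have hdenpos : (0:ℝ) < 2*p2*(1 - l2 - p1 + l2*p1) := by
    have h : 1 - l2 - p1 + l2*p1 = (1-l2)*(1-p1) := by ring
    rw [h]; positivity
  have hden : (2*p2*(1 - l2 - p1 + l2*p1)) ≠ 0 := ne_of_gt hdenpos
  obtain ⟨T, hTdef⟩ : ∃ T : ℝ, T = l2*(1 - p2 + 2*p1*p2 - l2*p1*p2)/((1 - l2)*(1 - p1)*p2) :=
    ⟨_, rfl⟩
  obtain ⟨Δ, hΔdef⟩ : ∃ Δ : ℝ, Δ = -(l2^2*p1/((1 - p1)*(1 - l2))) := ⟨_, rfl⟩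
  have hdet : ∀ x : ℝ, (x • (1 : Matrix (Fin 2) (Fin 2) ℝ) - R).det = x^2 - T*x + Δ := by
    intro x
    have h : (x • (1 : Matrix (Fin 2) (Fin 2) ℝ) - R).det =
        (x - l2*(1 - p2 + p1*p2) / ((1 - l2)*(1 - p1)*p2)) * (x - l2*p1 / (1 - p1))
        - l2 / ((1 - l2)*(1 - p1)*p2) * (l2*p1 / (1 - p1)) := by
      simp [R, Matrix.det_fin_two, Matrix.sub_apply, Matrix.smul_apply, Matrix.one_apply]
    rw [h, hTdef, hΔdef]
    field_simp
    ring
  have hST : 2*s - T = l2*r/((1 - l2)*(1 - p1)*p2) := by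
    have hfac : 1 - l2 - p1 + l2*p1 = (1-l2)*(1-p1) := by ring
    rw [hsval, hTdef, hfac]
    field_simp
    ring
  have hkey : (2*s - T)^2 = T^2 - 4*Δ := by
    rw [hST, div_pow, mul_pow, hr2, hTdef, hΔdef]
    field_simp
    ring
  have hT0 : 0 ≤ T := by
    rw [hTdef]
    apply div_nonneg
    · nlinarith [mul_nonneg hl0.le (by linarith : (0:ℝ) ≤ 1 - p2),
        mul_pos (mul_pos (mul_pos hl0 hp10) hp20) (by linarith : (0:ℝ) < 2 - l2)]
    · positivity
  have h2ST : 0 ≤ 2*s - T := by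
    rw [hST]; positivity
  rw [← hs]
  constructor
  · rw [hdet s]
    linear_combination hkey/4
  · intro x hx
    rw [hdet x] at hx
    have h5 : (x - s)*(x + s - T) = 0 := by linear_combination hx - hkey/4
    rcases mul_eq_zero.mp h5 with h | h
    · have hxS : x = s := by linarith
      rw [hxS, abs_of_nonneg (by linarith)]
    · have hxv : x = T - s := by linarith
      rw [hxv, abs_le]
      constructor <;> linarith
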